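/- arXiv:2108.07315 — 4 statements merged into one kernel-verified Lean document; each statement's English description precedes it below -/
import Mathlib

section
/- (A fixed point of the stable inversion equation solves the inverse dynamics) Suppose η : ℤ → ℝ^n satisfies Σ_{k∈ℤ} ‖f̃(η(k), 𝓎(k), k) − Ã η(k)‖_∞ < ∞ and satisfies the fixed-point equation η(k) = Σ_{i∈ℤ} φ(k−i)( f̃(η(i−1), 𝓎(i−1), i−1) − Ã η(i−1) ) for every k ∈ ℤ. Then η is an exact solution of the inverse state dynamics: η(k+1) = f̃(η(k), 𝓎(k), k) for all k ∈ ℤ. -/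
noncomputable section

attribute [local instance] Matrix.linftyOpNormedAddCommGroup

/-- All complex eigenvalues of the real matrix have modulus < 1. -/
def SpecLtOne {v : ℕ} (M : Matrix (Fin v) (Fin v) ℝ) : Prop :=
  ∀ z ∈ spectrum ℂ (M.map (algebraMap ℝ ℂ)), ‖z‖ < 1

/-- All complex eigenvalues of the real matrix have modulus > 1. -/
def SpecGtOne {w : ℕ} (M : Matrix (Fin w) (Fin w) ℝ) : Prop :=
  ∀ z ∈ spectrum ℂ (M.map (algebraMap ℝ ℂ)), 1 < ‖z‖

/-- The stable inversion kernel φ : φ(k) = diag(Ãₛᵏ,0) for k > 0, diag(I,0) for k = 0,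
and diag(0, −(Ãᵤ⁻¹)⁻ᵏ) for k < 0. -/
noncomputable def phiKer {v w : ℕ} (As : Matrix (Fin v) (Fin v) ℝ)
    (Au : Matrix (Fin w) (Fin w) ℝ) (k : ℤ) :
    Matrix (Fin v ⊕ Fin w) (Fin v ⊕ Fin w) ℝ :=
  if 0 < k then Matrix.fromBlocks (As ^ k.toNat) 0 0 0
  else if k = 0 then Matrix.fromBlocks 1 0 0 0
  else Matrix.fromBlocks 0 0 0 (-(Au⁻¹ ^ (-k).toNat))

lemma phiKer_succ {v w : ℕ} (As : Matrix (Fin v) (Fin v) ℝ)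
    (Au : Matrix (Fin w) (Fin w) ℝ) (hAudet : IsUnit Au.det) (m : ℤ) :
    phiKer As Au (m + 1) =
      (Matrix.fromBlocks As 0 0 Au) * phiKer As Au m + (if m = -1 then 1 else 0) := by
  rcases lt_trichotomy m 0 with hm | rfl | hm
  · rcases eq_or_ne m (-1) with rfl | hm1
    · have h1 : ((-(-1 : ℤ)).toNat) = 1 := by norm_num
      simp only [phiKer]
      have hone : (1 : Matrix (Fin v ⊕ Fin w) (Fin v ⊕ Fin w) ℝ) =
          Matrix.fromBlocks 1 0 0 1 := Matrix.fromBlocks_one.symm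
      norm_num [h1, Matrix.fromBlocks_multiply, Matrix.mul_nonsing_inv Au hAudet]
      rw [hone, Matrix.fromBlocks_add]
      norm_num
    · have h2 : m + 1 < 0 := by omega
      have h3 : m < 0 := hm
      have hn : (-(m : ℤ)).toNat = (-(m+1)).toNat + 1 := by omega
      simp only [phiKer, if_neg (by omega : ¬ (0:ℤ) < m + 1), if_neg (by omega : m + 1 ≠ 0),
        if_neg (by omega : ¬ (0:ℤ) < m), if_neg (by omega : m ≠ 0), if_neg hm1, hn,
        Matrix.fromBlocks_multiply]
      rw [pow_succ']
      simp [Matrix.mul_neg, ← Matrix.mul_assoc, Matrix.mul_nonsing_inv Au hAudet]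
  · simp [phiKer, Matrix.fromBlocks_multiply]
  · have h1 : (0:ℤ) < m + 1 := by omega
    have hn : (m + 1).toNat = m.toNat + 1 := by omega
    simp only [phiKer, if_pos h1, if_pos hm, hn, if_neg (by omega : m ≠ -1),
      Matrix.fromBlocks_multiply]
    rw [pow_succ']
    simp

/-- The general term `φ(k−i)( f̃(a(i−1), 𝓎(i−1), i−1) − Ã a(i−1) )` of the Picard update. -/
noncomputable def picardTerm {v w μ : ℕ} (As : Matrix (Fin v) (Fin v) ℝ)
    (Au : Matrix (Fin w) (Fin w) ℝ)
    (ftil : (Fin v ⊕ Fin w → ℝ) → (Fin (μ + 1) → ℝ) → ℤ → (Fin v ⊕ Fin w → ℝ))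
    (Y : ℤ → (Fin (μ + 1) → ℝ)) (a : ℤ → (Fin v ⊕ Fin w → ℝ)) (k i : ℤ) :
    Fin v ⊕ Fin w → ℝ :=
  (phiKer As Au (k - i)).mulVec
    (ftil (a (i - 1)) (Y (i - 1)) (i - 1) - (Matrix.fromBlocks As 0 0 Au).mulVec (a (i - 1)))

/-- Local approximate linearity of `f̃` with radius `s` and constants `K₁`, `K₂`. -/
def LocApproxLin {v w μ : ℕ} (As : Matrix (Fin v) (Fin v) ℝ) (Au : Matrix (Fin w) (Fin w) ℝ)
    (ftil : (Fin v ⊕ Fin w → ℝ) → (Fin (μ + 1) → ℝ) → ℤ → (Fin v ⊕ Fin w → ℝ))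
    (s K₁ K₂ : ℝ) : Prop :=
  ∀ (k : ℤ) (a b : Fin v ⊕ Fin w → ℝ), ‖a‖ ≤ s → ‖b‖ ≤ s →
    ∀ (ya yb : Fin (μ + 1) → ℝ), ‖ftil 0 ya k‖ ≤ s → ‖ftil 0 yb k‖ ≤ s →
      ‖(ftil a ya k - (Matrix.fromBlocks As 0 0 Au).mulVec a) -
          (ftil b yb k - (Matrix.fromBlocks As 0 0 Au).mulVec b)‖ ≤
        K₁ * ‖a - b‖ + K₂ * ‖ftil 0 ya k - ftil 0 yb k‖

/-- **A fixed point of the stable inversion equation solves the inverse dynamics.**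
If `η` satisfies the fixed-point equation (with absolutely convergent series), then
`η(k+1) = f̃(η(k), 𝓎(k), k)` for all `k ∈ ℤ`. -/
theorem fixed_point_solves_inverse_dynamics {v w μ : ℕ} (hn : 1 ≤ v + w) (hμ : 1 ≤ μ)
    (As : Matrix (Fin v) (Fin v) ℝ) (Au : Matrix (Fin w) (Fin w) ℝ)
    (hAs : SpecLtOne As) (hAu : SpecGtOne Au) (hAudet : IsUnit Au.det)
    (ftil : (Fin v ⊕ Fin w → ℝ) → (Fin (μ + 1) → ℝ) → ℤ → (Fin v ⊕ Fin w → ℝ))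
    (Y : ℤ → (Fin (μ + 1) → ℝ))
    (η : ℤ → (Fin v ⊕ Fin w → ℝ))
    (hw : Summable fun k : ℤ =>
      ‖ftil (η k) (Y k) k - (Matrix.fromBlocks As 0 0 Au).mulVec (η k)‖)
    (hsum : ∀ k : ℤ, Summable fun i : ℤ => picardTerm As Au ftil Y η k i)
    (hfix : ∀ k : ℤ, η k = ∑' i : ℤ, picardTerm As Au ftil Y η k i) :
    ∀ k : ℤ, η (k + 1) = ftil (η k) (Y k) k := by
  intro k
  set A := Matrix.fromBlocks As 0 0 Au with hA
  set d : ℤ → (Fin v ⊕ Fin w → ℝ) := fun j => ftil (η j) (Y j) j - A.mulVec (η j) with hd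
  have key : ∀ i : ℤ, picardTerm As Au ftil Y η (k + 1) i =
      A.mulVec (picardTerm As Au ftil Y η k i) + (if i = k + 1 then d k else 0) := by
    intro i
    have h1 : k + 1 - i = (k - i) + 1 := by ring
    rw [picardTerm, picardTerm, h1, phiKer_succ As Au hAudet, Matrix.add_mulVec,
      ← Matrix.mulVec_mulVec]
    congr 1
    by_cases hi : i = k + 1
    · subst hi
      simp only [if_pos (by omega : k - (k+1) = -1), if_pos rfl]
      rw [Matrix.one_mulVec]
      norm_num [hd, hA]
    · rw [if_neg (by omega : ¬ k - i = -1), if_neg hi, Matrix.zero_mulVec]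
  -- linear map machinery
  let L : (Fin v ⊕ Fin w → ℝ) →L[ℝ] (Fin v ⊕ Fin w → ℝ) :=
    LinearMap.toContinuousLinearMap A.mulVecLin
  have hLapp : ∀ x, L x = A.mulVec x := fun x => rfl
  have hs1 : Summable (fun i : ℤ => A.mulVec (picardTerm As Au ftil Y η k i)) := by
    have := (hsum k).map L.toLinearMap.toAddMonoidHom L.continuous
    simpa [hLapp, Function.comp_def] using this
  have hs2 : Summable (fun i : ℤ => if i = k + 1 then d k else 0) := by
    apply summable_of_ne_finset_zero (s := {k + 1})
    intro i hi
    simp only [Finset.mem_singleton] at hi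
    simp [hi]
  calc η (k + 1) = ∑' i : ℤ, picardTerm As Au ftil Y η (k + 1) i := hfix (k + 1)
    _ = ∑' i : ℤ, (A.mulVec (picardTerm As Au ftil Y η k i) + (if i = k + 1 then d k else 0)) := by
        exact tsum_congr key
    _ = (∑' i : ℤ, A.mulVec (picardTerm As Au ftil Y η k i)) +
        (∑' i : ℤ, (if i = k + 1 then d k else 0)) := Summable.tsum_add hs1 hs2
    _ = A.mulVec (η k) + d k := by
        congr 1
        · rw [hfix k]
          have := L.map_tsum (hsum k)
          simpa [hLapp] using this.symm
        · exact tsum_eq_single (k + 1) (by intro b hb; simp [hb]) |>.trans (by simp)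
    _ = ftil (η k) (Y k) k := by
        simp [hd]
end
end

section
/- (Bounded forward solution of a stable linear recursion) Let A be a real v×v matrix all of whose (complex) eigenvalues have modulus < 1, let B be a real v×p matrix, and let w : ℤ → ℝ^p be a bounded sequence. Then for every k ∈ ℤ the series x(k) := Σ_{i=−∞}^{k} A^{k−i} B w(i−1) converges absolutely, the sequence x is bounded, and x satisfies the forward recursion x(k) = A x(k−1) + B w(k−1) for all k ∈ ℤ. -/
noncomputable section

section Aux

attribute [local instance] Matrix.linftyOpNormedAddCommGroup Matrix.linftyOpNormedSpace
  Matrix.linftyOpNormedRing Matrix.linftyOpNormedAlgebra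

lemma norm_map_complex {v : ℕ} (X : Matrix (Fin v) (Fin v) ℝ) :
    ‖X.map (algebraMap ℝ ℂ)‖ = ‖X‖ := by
  rw [Matrix.linfty_opNorm_def, Matrix.linfty_opNorm_def]
  congr 1
  refine Finset.sup_congr rfl fun i _ => Finset.sum_congr rfl fun j _ => ?_
  ext
  simp [Matrix.map_apply]

lemma summable_pow_norm {v : ℕ} (A : Matrix (Fin v) (Fin v) ℝ)
    (hA : ∀ z ∈ spectrum ℂ (A.map (algebraMap ℝ ℂ)), ‖z‖ < 1) :
    Summable fun n : ℕ => ‖A ^ n‖ := by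
  rcases Nat.eq_zero_or_pos v with hv | hv
  · subst hv
    have h0 : ∀ n : ℕ, ‖A ^ n‖ = 0 := by
      intro n; rw [Matrix.linfty_opNorm_def]; simp
    simpa [h0] using summable_zero
  · haveI : NeZero v := ⟨hv.ne'⟩
    set M : Matrix (Fin v) (Fin v) ℂ := A.map (algebraMap ℝ ℂ) with hM
    have hρ : spectralRadius ℂ M < 1 := by
      have h1 : ∀ z ∈ spectrum ℂ M, ‖z‖₊ < (1 : NNReal) := by
        intro z hz
        have := hA z hz
        simpa [← NNReal.coe_lt_coe, coe_nnnorm] using this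
      simpa using spectrum.spectralRadius_lt_of_forall_lt M h1
    obtain ⟨r, hρr, hr1⟩ := ENNReal.lt_iff_exists_nnreal_btwn.mp hρ
    have hr1' : (r : ℝ) < 1 := by exact_mod_cast hr1
    have hgel := spectrum.pow_nnnorm_pow_one_div_tendsto_nhds_spectralRadius M
    have hev : ∀ᶠ n : ℕ in Filter.atTop, (‖M ^ n‖₊ : ENNReal) ^ (1 / (n : ℝ)) < (r : ENNReal) :=
      hgel.eventually_lt_const hρr
    rw [Filter.eventually_atTop] at hev
    obtain ⟨N, hN⟩ := hev
    have hMA : ∀ n : ℕ, ‖M ^ n‖ = ‖A ^ n‖ := by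
      intro n
      have : M ^ n = (A ^ n).map (algebraMap ℝ ℂ) := by
        have h := map_pow ((algebraMap ℝ ℂ).mapMatrix) A n
        simpa [RingHom.mapMatrix_apply, hM] using h.symm
      rw [this, norm_map_complex]
    have key : ∀ n, ‖A ^ (n + max N 1)‖ ≤ (r : ℝ) ^ (n + max N 1) := by
      intro n
      set m := n + max N 1 with hm
      have hm1 : 1 ≤ m := le_trans (le_max_right N 1) (Nat.le_add_left _ _)
      have h := hN m (le_trans (le_max_left N 1) (Nat.le_add_left _ _))
      have hmne : (m : ℝ) ≠ 0 := by positivity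
      have h2 : ((‖M ^ m‖₊ : ENNReal) ^ (1 / (m : ℝ))) ^ (m : ℝ) ≤ (r : ENNReal) ^ (m : ℝ) :=
        ENNReal.rpow_le_rpow h.le (by positivity)
      rw [← ENNReal.rpow_mul, one_div, inv_mul_cancel₀ hmne, ENNReal.rpow_one] at h2
      have h3 : (‖M ^ m‖₊ : ENNReal) ≤ ((r ^ m : NNReal) : ENNReal) := by
        rw [ENNReal.coe_pow]
        calc (‖M ^ m‖₊ : ENNReal) ≤ (r : ENNReal) ^ (m : ℝ) := h2
        _ = (r : ENNReal) ^ m := by rw [ENNReal.rpow_natCast]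
      have h4 : ‖M ^ m‖₊ ≤ r ^ m := by exact_mod_cast h3
      have h5 : ‖M ^ m‖ ≤ (r : ℝ) ^ m := by
        calc ‖M ^ m‖ = ((‖M ^ m‖₊ : NNReal) : ℝ) := (coe_nnnorm _).symm
        _ ≤ ((r ^ m : NNReal) : ℝ) := by exact_mod_cast h4
        _ = (r : ℝ) ^ m := by push_cast; ring
      rw [← hMA]; exact h5
    rw [← summable_nat_add_iff (max N 1)]
    refine Summable.of_nonneg_of_le (fun n => norm_nonneg _) key ?_
    have hg : Summable fun n : ℕ => (r : ℝ) ^ (n + max N 1) := by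
      simpa [pow_add] using
        (summable_geometric_of_lt_one r.coe_nonneg hr1').mul_right ((r : ℝ) ^ (max N 1))
    exact hg

/-- Key bound usable outside the matrix-norm section. -/
lemma exists_summable_bound {v p : ℕ} (A : Matrix (Fin v) (Fin v) ℝ)
    (hA : ∀ z ∈ spectrum ℂ (A.map (algebraMap ℝ ℂ)), ‖z‖ < 1)
    (B : Matrix (Fin v) (Fin p) ℝ) :
    ∃ c : ℕ → ℝ, Summable c ∧ (∀ j, 0 ≤ c j) ∧
      ∀ (j : ℕ) (x : Fin p → ℝ), ‖(A ^ j).mulVec (B.mulVec x)‖ ≤ c j * ‖x‖ := by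
  refine ⟨fun j => ‖A ^ j‖ * ‖B‖, (summable_pow_norm A hA).mul_right _,
    fun j => by positivity, fun j x => ?_⟩
  calc ‖(A ^ j).mulVec (B.mulVec x)‖ ≤ ‖A ^ j‖ * ‖B.mulVec x‖ :=
        Matrix.linfty_opNorm_mulVec _ _
  _ ≤ ‖A ^ j‖ * (‖B‖ * ‖x‖) := by
      have := Matrix.linfty_opNorm_mulVec B x
      have h0 : (0:ℝ) ≤ ‖A ^ j‖ := norm_nonneg _
      nlinarith [norm_nonneg (B.mulVec x)]
  _ = (‖A ^ j‖ * ‖B‖) * ‖x‖ := by ring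

end Aux

/-- The candidate bounded forward solution `x(k) = Σ_{i=−∞}^{k} A^{k−i} B w(i−1)`,
reindexed by `j = k − i`. -/
noncomputable def fwdSol {v p : ℕ} (A : Matrix (Fin v) (Fin v) ℝ)
    (B : Matrix (Fin v) (Fin p) ℝ) (w : ℤ → Fin p → ℝ) (k : ℤ) : Fin v → ℝ :=
  ∑' j : ℕ, (A ^ j).mulVec (B.mulVec (w (k - (j : ℤ) - 1)))

/-- **Bounded forward solution of a stable linear recursion.**
If all eigenvalues of `A` have modulus < 1 and `w` is bounded, then for every `k` the series
defining `x(k)` converges absolutely, `x` is bounded, and `x(k) = A x(k−1) + B w(k−1)`. -/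
theorem bounded_forward_solution {v p : ℕ}
    (A : Matrix (Fin v) (Fin v) ℝ) (hA : SpecLtOne A)
    (B : Matrix (Fin v) (Fin p) ℝ) (w : ℤ → Fin p → ℝ)
    (hw : ∃ C : ℝ, ∀ k : ℤ, ‖w k‖ ≤ C) :
    (∀ k : ℤ, Summable fun j : ℕ => ‖(A ^ j).mulVec (B.mulVec (w (k - (j : ℤ) - 1)))‖) ∧
    (∃ C : ℝ, ∀ k : ℤ, ‖fwdSol A B w k‖ ≤ C) ∧
    (∀ k : ℤ, fwdSol A B w k = A.mulVec (fwdSol A B w (k - 1)) + B.mulVec (w (k - 1))) := by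
  obtain ⟨C, hC⟩ := hw
  have hC0 : 0 ≤ C := le_trans (norm_nonneg (w 0)) (hC 0)
  obtain ⟨c, hcsum, hc0, hcb⟩ := exists_summable_bound A hA B
  -- absolute convergence
  have hsum : ∀ k : ℤ,
      Summable fun j : ℕ => ‖(A ^ j).mulVec (B.mulVec (w (k - (j : ℤ) - 1)))‖ := by
    intro k
    refine Summable.of_nonneg_of_le (fun j => norm_nonneg _) (fun j => ?_)
      (hcsum.mul_right C)
    calc ‖(A ^ j).mulVec (B.mulVec (w (k - (j : ℤ) - 1)))‖
        ≤ c j * ‖w (k - (j : ℤ) - 1)‖ := hcb j _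
    _ ≤ c j * C := by
        have := hC (k - (j : ℤ) - 1)
        nlinarith [hc0 j]
  have hsum' : ∀ k : ℤ,
      Summable fun j : ℕ => (A ^ j).mulVec (B.mulVec (w (k - (j : ℤ) - 1))) :=
    fun k => (hsum k).of_norm
  refine ⟨hsum, ⟨(∑' j, c j) * C, fun k => ?_⟩, fun k => ?_⟩
  · calc ‖fwdSol A B w k‖ ≤ ∑' j : ℕ, ‖(A ^ j).mulVec (B.mulVec (w (k - (j : ℤ) - 1)))‖ :=
        norm_tsum_le_tsum_norm (hsum k)
    _ ≤ ∑' j : ℕ, c j * C := by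
        refine Summable.tsum_le_tsum (fun j => ?_) (hsum k) (hcsum.mul_right C)
        calc ‖(A ^ j).mulVec (B.mulVec (w (k - (j : ℤ) - 1)))‖
            ≤ c j * ‖w (k - (j : ℤ) - 1)‖ := hcb j _
        _ ≤ c j * C := by
            have := hC (k - (j : ℤ) - 1)
            nlinarith [hc0 j]
    _ = (∑' j, c j) * C := tsum_mul_right
  · -- the recursion
    have h0 : fwdSol A B w k
        = (A ^ 0).mulVec (B.mulVec (w (k - (0 : ℕ) - 1)))
          + ∑' j : ℕ, (A ^ (j + 1)).mulVec (B.mulVec (w (k - ((j : ℕ) + 1 : ℕ) - 1))) := by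
      exact Summable.tsum_eq_zero_add (hsum' k)
    have hz : (A ^ 0).mulVec (B.mulVec (w (k - (0 : ℕ) - 1))) = B.mulVec (w (k - 1)) := by
      simp
    have hterm : ∀ j : ℕ, (A ^ (j + 1)).mulVec (B.mulVec (w (k - ((j : ℕ) + 1 : ℕ) - 1)))
        = A.mulVec ((A ^ j).mulVec (B.mulVec (w (k - 1 - (j : ℤ) - 1)))) := by
      intro j
      have harg : k - ((j : ℕ) + 1 : ℕ) - 1 = k - 1 - (j : ℤ) - 1 := by push_cast; ring
      rw [harg, pow_succ', ← Matrix.mulVec_mulVec]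
    have hmap : ∑' j : ℕ, A.mulVec ((A ^ j).mulVec (B.mulVec (w (k - 1 - (j : ℤ) - 1))))
        = A.mulVec (fwdSol A B w (k - 1)) := by
      let L : (Fin v → ℝ) →L[ℝ] (Fin v → ℝ) :=
        LinearMap.toContinuousLinearMap (Matrix.mulVecLin A)
      have hL : ∀ x : Fin v → ℝ, L x = A.mulVec x := fun x => rfl
      calc ∑' j : ℕ, A.mulVec ((A ^ j).mulVec (B.mulVec (w (k - 1 - (j : ℤ) - 1))))
          = ∑' j : ℕ, L ((A ^ j).mulVec (B.mulVec (w (k - 1 - (j : ℤ) - 1)))) := by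
            simp [hL]
      _ = L (∑' j : ℕ, (A ^ j).mulVec (B.mulVec (w (k - 1 - (j : ℤ) - 1)))) :=
            (L.map_tsum (hsum' (k - 1))).symm
      _ = A.mulVec (fwdSol A B w (k - 1)) := by rw [hL]; rfl
    rw [h0, hz]
    rw [tsum_congr hterm, hmap]
    exact add_comm _ _
end
end

section
/- (LTI stable inversion: explicit bounded solution on the bi-infinite timeline) Suppose the inverse dynamics are linear: f̃(η, 𝓎, k) = Ã η + B̃ 𝓎 where B̃ = [B̃_s; B̃_u] is partitioned conformally with Ã = diag(Ã_s, Ã_u), and suppose the driving signal 𝓎 : ℤ → ℝ^{μ+1} is bounded. Then for every k ∈ ℤ the series η(k) := Σ_{i∈ℤ} φ(k−i) B̃ 𝓎(i−1) converges absolutely, the sequence η is bounded, its stable block equals Σ_{i=−∞}^{k} Ã_s^{k−i} B̃_s 𝓎(i−1) and its unstable block equals −Σ_{i=k+1}^{∞} Ã_u^{k−i} B̃_u 𝓎(i−1), and η satisfies the full (unstable) recursion η(k+1) = Ã η(k) + B̃ 𝓎(k) for all k ∈ ℤ. -/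
noncomputable section

/-- The LTI stable inversion solution `η(k) = Σ_{i∈ℤ} φ(k−i) B̃ 𝓎(i−1)`. -/
noncomputable def ltiSol {v w μ : ℕ} (As : Matrix (Fin v) (Fin v) ℝ)
    (Au : Matrix (Fin w) (Fin w) ℝ) (Bt : Matrix (Fin v ⊕ Fin w) (Fin (μ + 1)) ℝ)
    (Y : ℤ → Fin (μ + 1) → ℝ) (k : ℤ) : Fin v ⊕ Fin w → ℝ :=
  ∑' i : ℤ, (phiKer As Au (k - i)).mulVec (Bt.mulVec (Y (i - 1)))

attribute [local instance] Matrix.linftyOpNormedAddCommGroup Matrix.linftyOpNormedRing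
  Matrix.linftyOpNormedAlgebra

open scoped Matrix

section LTIAux

lemma nnnorm_map_complex {v : ℕ} (A : Matrix (Fin v) (Fin v) ℝ) :
    ‖A.map (algebraMap ℝ ℂ)‖₊ = ‖A‖₊ := by
  simp [Matrix.linfty_opNNNorm_def, Matrix.map_apply, Complex.coe_algebraMap]

lemma decay {v : ℕ} (M : Matrix (Fin v) (Fin v) ℝ)
    (h : ∀ z ∈ spectrum ℂ (M.map (algebraMap ℝ ℂ)), ‖z‖ < 1) :
    ∃ C r : ℝ, 0 < C ∧ 0 < r ∧ r < 1 ∧ ∀ j : ℕ, ‖M ^ j‖ ≤ C * r ^ j := by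
  rcases Nat.eq_zero_or_pos v with hv | hv
  · refine ⟨1, 1/2, one_pos, by norm_num, by norm_num, fun j => ?_⟩
    subst hv
    have : ‖M ^ j‖ = 0 := by
      simp [Matrix.linfty_opNorm_def]
    rw [this]; positivity
  haveI : Nonempty (Fin v) := Fin.pos_iff_nonempty.mp hv
  haveI : CompleteSpace (Matrix (Fin v) (Fin v) ℂ) := FiniteDimensional.complete ℂ _
  set f : ℝ →+* ℂ := algebraMap ℝ ℂ
  set M' : Matrix (Fin v) (Fin v) ℂ := M.map f with hM'
  have hM'pow : ∀ n : ℕ, M' ^ n = (M ^ n).map f := by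
    intro n
    have : M' = f.mapMatrix M := rfl
    rw [this, ← map_pow]; rfl
  have hsr : spectralRadius ℂ M' < 1 := by
    have := spectrum.spectralRadius_lt_of_forall_lt (a := M') (r := 1) ?_
    · simpa using this
    · intro z hz
      have hz1 : ‖z‖ < 1 := h z hz
      rw [← NNReal.coe_lt_coe]
      simpa using hz1
  obtain ⟨c, hc1, hc2⟩ := exists_between hsr
  have hc_ne_top : c ≠ ⊤ := (hc2.trans_le le_top).ne
  set r : NNReal := c.toNNReal with hrdef
  have hrc : (r : ENNReal) = c := ENNReal.coe_toNNReal hc_ne_top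
  have hr1 : r < 1 := by
    rw [← ENNReal.coe_lt_one_iff, hrc]; exact hc2
  have hr0 : 0 < r := by
    rw [← ENNReal.coe_pos, hrc]
    exact zero_le.trans_lt hc1
  have hev : ∀ᶠ n : ℕ in Filter.atTop, (‖M' ^ n‖₊ : ENNReal) ^ (1/(n:ℝ)) < c :=
    (spectrum.pow_nnnorm_pow_one_div_tendsto_nhds_spectralRadius M').eventually_lt_const hc1
  obtain ⟨N, hN⟩ := Filter.eventually_atTop.mp hev
  have key : ∀ n, max N 1 ≤ n → ‖M ^ n‖₊ < r ^ n := by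
    intro n hn
    have hn1 : 1 ≤ n := le_trans (le_max_right _ _) hn
    have hnn : (n : ℝ) ≠ 0 := by positivity
    have h1 : (‖M' ^ n‖₊ : ENNReal) ^ (1/(n:ℝ)) < c := hN n (le_trans (le_max_left _ _) hn)
    have h2 := ENNReal.rpow_lt_rpow h1 (by positivity : (0:ℝ) < (n:ℝ))
    rw [← ENNReal.rpow_mul, one_div, inv_mul_cancel₀ hnn, ENNReal.rpow_one] at h2
    have h3 : (‖M' ^ n‖₊ : ENNReal) < (r : ENNReal) ^ n := by
      rw [hrc, ← ENNReal.rpow_natCast]; exact h2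
    rw [← ENNReal.coe_pow, ENNReal.coe_lt_coe] at h3
    have h4 : ‖M ^ n‖₊ = ‖M' ^ n‖₊ := by rw [hM'pow, nnnorm_map_complex]
    rwa [h4]
  set D : NNReal := max 1 ((Finset.range (max N 1 + 1)).sup fun n => ‖M ^ n‖₊ / r ^ n) with hD
  refine ⟨D, r, ?_, hr0, hr1, ?_⟩
  · have : (1 : NNReal) ≤ D := le_max_left _ _
    exact_mod_cast lt_of_lt_of_le one_pos this
  intro j
  have hrj : (0 : NNReal) < r ^ j := pow_pos hr0 j
  have : ‖M ^ j‖₊ ≤ D * r ^ j := by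
    by_cases hj : j ≤ max N 1
    · have hmem : j ∈ Finset.range (max N 1 + 1) := Finset.mem_range.mpr (by omega)
      have h5 : ‖M ^ j‖₊ / r ^ j ≤ D :=
        le_trans (Finset.le_sup (f := fun n => ‖M ^ n‖₊ / r ^ n) hmem) (le_max_right _ _)
      calc ‖M ^ j‖₊ = (‖M ^ j‖₊ / r ^ j) * r ^ j := by
              rw [div_mul_cancel₀]; exact hrj.ne'
        _ ≤ D * r ^ j := mul_le_mul_left h5 _
    · have := (key j (by omega)).le
      calc ‖M ^ j‖₊ ≤ r ^ j := this
        _ = 1 * r ^ j := (one_mul _).symm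
        _ ≤ D * r ^ j := mul_le_mul_left (le_max_left _ _) _
  calc ‖M ^ j‖ = ((‖M ^ j‖₊ : NNReal) : ℝ) := rfl
    _ ≤ ((D * r ^ j : NNReal) : ℝ) := by exact_mod_cast this
    _ = D * r ^ j := by push_cast; ring

lemma specLtOne_inv {w : ℕ} (Au : Matrix (Fin w) (Fin w) ℝ)
    (hAu : ∀ z ∈ spectrum ℂ (Au.map (algebraMap ℝ ℂ)), 1 < ‖z‖)
    (hdet : IsUnit Au.det) :
    ∀ z ∈ spectrum ℂ (Au⁻¹.map (algebraMap ℝ ℂ)), ‖z‖ < 1 := by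
  intro z hz
  set f : ℝ →+* ℂ := algebraMap ℝ ℂ
  have hmul : Au * Au⁻¹ = 1 := Matrix.mul_nonsing_inv Au hdet
  have hmap : (Au.map f) * (Au⁻¹.map f) = 1 := by
    have := congrArg (f.mapMatrix) hmul
    simpa [map_mul] using this
  have hinv : (Au.map f)⁻¹ = Au⁻¹.map f := Matrix.inv_eq_right_inv hmap
  have hunit : IsUnit (Au.map f) := by
    rw [Matrix.isUnit_iff_isUnit_det]
    have : (Au.map f).det = f Au.det := (RingHom.map_det f Au).symm
    rw [this]
    exact hdet.map f
  set U : (Matrix (Fin w) (Fin w) ℂ)ˣ := hunit.unit with hU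
  have hUcoe : (U : Matrix (Fin w) (Fin w) ℂ) = Au.map f := rfl
  have hUinv : ((U⁻¹ : (Matrix (Fin w) (Fin w) ℂ)ˣ) : Matrix (Fin w) (Fin w) ℂ)
      = Au⁻¹.map f := by
    rw [Matrix.coe_units_inv, hUcoe, hinv]
  rw [← hUinv] at hz
  by_cases hz0 : z = 0
  · exfalso
    rw [hz0, spectrum.zero_mem_iff] at hz
    exact hz (U⁻¹).isUnit
  · set zu : ℂˣ := Units.mk0 z hz0 with hzu
    have h1 : (↑zu : ℂ) ∈ spectrum ℂ ((U⁻¹ : (Matrix (Fin w) (Fin w) ℂ)ˣ) :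
        Matrix (Fin w) (Fin w) ℂ) := hz
    rw [spectrum.inv_mem_iff, inv_inv] at h1
    have h2 : 1 < ‖((↑zu⁻¹ : ℂ))‖ := hAu _ (by rwa [hUcoe] at h1)
    have : ‖((↑zu⁻¹ : ℂ))‖ = ‖z‖⁻¹ := by
      simp [hzu]
    rw [this] at h2
    have habs : 0 < ‖z‖ := by
      simpa using hz0
    rw [lt_inv_comm₀ one_pos habs] at h2
    simpa using h2

lemma norm_comp_inl_le {v w : ℕ} (x : Fin v ⊕ Fin w → ℝ) : ‖x ∘ Sum.inl‖ ≤ ‖x‖ :=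
  (pi_norm_le_iff_of_nonneg (norm_nonneg x)).mpr fun a => norm_le_pi_norm x (Sum.inl a)

lemma norm_comp_inr_le {v w : ℕ} (x : Fin v ⊕ Fin w → ℝ) : ‖x ∘ Sum.inr‖ ≤ ‖x‖ :=
  (pi_norm_le_iff_of_nonneg (norm_nonneg x)).mpr fun b => norm_le_pi_norm x (Sum.inr b)

lemma norm_elim_le_max {v w : ℕ} (u : Fin v → ℝ) (t : Fin w → ℝ) :
    ‖(Sum.elim u t : Fin v ⊕ Fin w → ℝ)‖ ≤ max ‖u‖ ‖t‖ := by
  refine (pi_norm_le_iff_of_nonneg (le_max_of_le_left (norm_nonneg u))).mpr fun s => ?_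
  cases s with
  | inl a => exact le_max_of_le_left (norm_le_pi_norm u a)
  | inr b => exact le_max_of_le_right (norm_le_pi_norm t b)

lemma fromBlocks_diag_mulVec {v w : ℕ} (A : Matrix (Fin v) (Fin v) ℝ)
    (D : Matrix (Fin w) (Fin w) ℝ) (x : Fin v ⊕ Fin w → ℝ) :
    (Matrix.fromBlocks A 0 0 D).mulVec x =
      Sum.elim (A.mulVec (x ∘ Sum.inl)) (D.mulVec (x ∘ Sum.inr)) := by
  funext s
  cases s <;>
    simp [Matrix.mulVec, dotProduct, Fintype.sum_sum_type, Function.comp]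

lemma mulVec_comp_inl {v w m : ℕ} (Bt : Matrix (Fin v ⊕ Fin w) (Fin m) ℝ) (y : Fin m → ℝ) :
    (Bt.mulVec y) ∘ Sum.inl = (Bt.submatrix Sum.inl id).mulVec y := rfl

lemma mulVec_comp_inr {v w m : ℕ} (Bt : Matrix (Fin v ⊕ Fin w) (Fin m) ℝ) (y : Fin m → ℝ) :
    (Bt.mulVec y) ∘ Sum.inr = (Bt.submatrix Sum.inr id).mulVec y := rfl

lemma mulVec_tsum {n : ℕ} (A : Matrix (Fin n) (Fin n) ℝ) {g : ℕ → Fin n → ℝ}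
    (hg : Summable g) : A.mulVec (∑' j, g j) = ∑' j, A.mulVec (g j) := by
  calc A.mulVec (∑' j, g j)
      = (LinearMap.toContinuousLinearMap A.mulVecLin) (∑' j, g j) := by
        simp [Matrix.mulVecLin_apply]
    _ = ∑' j, (LinearMap.toContinuousLinearMap A.mulVecLin) (g j) :=
        ContinuousLinearMap.map_tsum _ hg
    _ = ∑' j, A.mulVec (g j) := tsum_congr fun j => by simp [Matrix.mulVecLin_apply]

end LTIAux

lemma phiKer_nonneg {v w : ℕ} (As : Matrix (Fin v) (Fin v) ℝ)
    (Au : Matrix (Fin w) (Fin w) ℝ) (m : ℤ) (hm : 0 ≤ m) :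
    phiKer As Au m = Matrix.fromBlocks (As ^ m.toNat) 0 0 0 := by
  rcases hm.lt_or_eq with h | h
  · simp [phiKer, h]
  · rw [← h]
    simp [phiKer]

lemma phiKer_neg {v w : ℕ} (As : Matrix (Fin v) (Fin v) ℝ)
    (Au : Matrix (Fin w) (Fin w) ℝ) (m : ℤ) (hm : m < 0) :
    phiKer As Au m = Matrix.fromBlocks 0 0 0 (-(Au⁻¹ ^ (-m).toNat)) := by
  simp [phiKer, hm.ne, not_lt.mpr hm.le]

/-- **LTI stable inversion: explicit bounded solution on the bi-infinite timeline.**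
For linear inverse dynamics `f̃(η,𝓎,k) = Ã η + B̃ 𝓎` with bounded driving signal `𝓎`, the series
`η(k) = Σ_{i∈ℤ} φ(k−i) B̃ 𝓎(i−1)` converges absolutely for every `k`, `η` is bounded, its stable
block is `Σ_{i=−∞}^{k} Ãₛ^{k−i} B̃ₛ 𝓎(i−1)`, its unstable block is
`−Σ_{i=k+1}^{∞} Ãᵤ^{k−i} B̃ᵤ 𝓎(i−1)`, and `η(k+1) = Ã η(k) + B̃ 𝓎(k)` for all `k`. -/
theorem lti_stable_inversion {v w μ : ℕ} (hn : 1 ≤ v + w) (hμ : 1 ≤ μ)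
    (As : Matrix (Fin v) (Fin v) ℝ) (Au : Matrix (Fin w) (Fin w) ℝ)
    (hAs : SpecLtOne As) (hAu : SpecGtOne Au) (hAudet : IsUnit Au.det)
    (Bt : Matrix (Fin v ⊕ Fin w) (Fin (μ + 1)) ℝ)
    (Y : ℤ → Fin (μ + 1) → ℝ) (hY : ∃ C : ℝ, ∀ k : ℤ, ‖Y k‖ ≤ C) :
    (∀ k : ℤ, Summable fun i : ℤ => ‖(phiKer As Au (k - i)).mulVec (Bt.mulVec (Y (i - 1)))‖) ∧
    (∃ C : ℝ, ∀ k : ℤ, ‖ltiSol As Au Bt Y k‖ ≤ C) ∧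
    (∀ k : ℤ,
      Summable (fun j : ℕ =>
        (As ^ j).mulVec ((Bt.submatrix Sum.inl id).mulVec (Y (k - (j : ℤ) - 1)))) ∧
      (fun a : Fin v => ltiSol As Au Bt Y k (Sum.inl a)) =
        ∑' j : ℕ, (As ^ j).mulVec ((Bt.submatrix Sum.inl id).mulVec (Y (k - (j : ℤ) - 1)))) ∧
    (∀ k : ℤ,
      Summable (fun j : ℕ =>
        (Au⁻¹ ^ (j + 1)).mulVec ((Bt.submatrix Sum.inr id).mulVec (Y (k + (j : ℤ))))) ∧
      (fun b : Fin w => ltiSol As Au Bt Y k (Sum.inr b)) =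
        -∑' j : ℕ, (Au⁻¹ ^ (j + 1)).mulVec ((Bt.submatrix Sum.inr id).mulVec (Y (k + (j : ℤ))))) ∧
    (∀ k : ℤ, ltiSol As Au Bt Y (k + 1) =
        (Matrix.fromBlocks As 0 0 Au).mulVec (ltiSol As Au Bt Y k) + Bt.mulVec (Y k)) := by
  classical
  obtain ⟨C₀, hC₀⟩ := hY
  have hC₀0 : 0 ≤ C₀ := (norm_nonneg _).trans (hC₀ 0)
  obtain ⟨Cs, rs, hCs, hrs0, hrs1, hspow⟩ := decay As hAs
  obtain ⟨Cu, ru, hCu, hru0, hru1, hupow⟩ := decay Au⁻¹ (specLtOne_inv Au hAu hAudet)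
  set K : ℝ := ‖Bt‖ * C₀ with hKdef
  have hK0 : 0 ≤ K := mul_nonneg (norm_nonneg _) hC₀0
  have hBy : ∀ m : ℤ, ‖Bt.mulVec (Y m)‖ ≤ K := fun m =>
    (Matrix.linfty_opNorm_mulVec _ _).trans
      (mul_le_mul_of_nonneg_left (hC₀ m) (norm_nonneg _))
  have hBs : ∀ m : ℤ, ‖(Bt.submatrix Sum.inl id).mulVec (Y m)‖ ≤ K := fun m => by
    rw [← mulVec_comp_inl]; exact (norm_comp_inl_le _).trans (hBy m)
  have hBu : ∀ m : ℤ, ‖(Bt.submatrix Sum.inr id).mulVec (Y m)‖ ≤ K := fun m => by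
    rw [← mulVec_comp_inr]; exact (norm_comp_inr_le _).trans (hBy m)
  have hgs_norm : ∀ (j : ℕ) (m : ℤ),
      ‖(As ^ j).mulVec ((Bt.submatrix Sum.inl id).mulVec (Y m))‖ ≤ Cs * K * rs ^ j := by
    intro j m
    calc ‖(As ^ j).mulVec ((Bt.submatrix Sum.inl id).mulVec (Y m))‖
        ≤ ‖As ^ j‖ * ‖(Bt.submatrix Sum.inl id).mulVec (Y m)‖ :=
          Matrix.linfty_opNorm_mulVec _ _
      _ ≤ (Cs * rs ^ j) * K :=
          mul_le_mul (hspow j) (hBs m) (norm_nonneg _) (by positivity)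
      _ = Cs * K * rs ^ j := by ring
  have hgu_norm : ∀ (n : ℕ) (m : ℤ),
      ‖(Au⁻¹ ^ n).mulVec ((Bt.submatrix Sum.inr id).mulVec (Y m))‖ ≤ Cu * K * ru ^ n := by
    intro n m
    calc ‖(Au⁻¹ ^ n).mulVec ((Bt.submatrix Sum.inr id).mulVec (Y m))‖
        ≤ ‖Au⁻¹ ^ n‖ * ‖(Bt.submatrix Sum.inr id).mulVec (Y m)‖ :=
          Matrix.linfty_opNorm_mulVec _ _
      _ ≤ (Cu * ru ^ n) * K :=
          mul_le_mul (hupow n) (hBu m) (norm_nonneg _) (by positivity)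
      _ = Cu * K * ru ^ n := by ring
  set F : ℤ → ℤ → (Fin v ⊕ Fin w → ℝ) :=
    fun k i => (phiKer As Au (k - i)).mulVec (Bt.mulVec (Y (i - 1))) with hF
  have hFle : ∀ k i : ℤ, i ≤ k →
      F k i = Sum.elim
        ((As ^ (k - i).toNat).mulVec ((Bt.submatrix Sum.inl id).mulVec (Y (i - 1)))) 0 := by
    intro k i hik
    rw [hF]
    dsimp only
    rw [phiKer_nonneg As Au _ (by omega), fromBlocks_diag_mulVec, Matrix.zero_mulVec,
      mulVec_comp_inl]
  have hFgt : ∀ k i : ℤ, k < i →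
      F k i = Sum.elim (0 : Fin v → ℝ)
        (-((Au⁻¹ ^ (i - k).toNat).mulVec ((Bt.submatrix Sum.inr id).mulVec (Y (i - 1))))) := by
    intro k i hik
    rw [hF]
    dsimp only
    rw [phiKer_neg As Au _ (by omega), fromBlocks_diag_mulVec, Matrix.zero_mulVec,
      mulVec_comp_inr, Matrix.neg_mulVec, show (-(k - i)).toNat = (i - k).toNat from by omega]
  have hFnorm_le : ∀ k i : ℤ, i ≤ k → ‖F k i‖ ≤ Cs * K * rs ^ (k - i).toNat := by
    intro k i hik
    rw [hFle k i hik]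
    refine (norm_elim_le_max _ _).trans ?_
    rw [norm_zero]
    exact max_le (hgs_norm _ _) (by positivity)
  have hFnorm_gt : ∀ k i : ℤ, k < i → ‖F k i‖ ≤ Cu * K * ru ^ (i - k).toNat := by
    intro k i hik
    rw [hFgt k i hik]
    refine (norm_elim_le_max _ _).trans ?_
    rw [norm_zero, norm_neg]
    exact max_le (by positivity) (hgu_norm _ _)
  -- Part 1 : summability over ℤ
  have hsum_norm : ∀ k : ℤ, Summable fun i : ℤ => ‖F k i‖ := by
    intro k
    have e1inj : Function.Injective (fun j : ℕ => k - (j : ℤ)) := by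
      intro a b h
      have h' : k - (a : ℤ) = k - (b : ℤ) := h
      omega
    have e2inj : Function.Injective (fun j : ℕ => k + 1 + (j : ℤ)) := by
      intro a b h
      have h' : k + 1 + (a : ℤ) = k + 1 + (b : ℤ) := h
      omega
    have h1 : Summable fun i : ℤ => (if i ≤ k then ‖F k i‖ else 0) := by
      rw [← Function.Injective.summable_iff e1inj ?_]
      · refine Summable.of_norm_bounded (g := fun j => Cs * K * rs ^ j)
          ((summable_geometric_of_lt_one hrs0.le hrs1).mul_left _) fun j => ?_
        have hle := hFnorm_le k (k - j) (by omega)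
        rw [show ((k : ℤ) - (k - (j : ℤ))).toNat = j from by omega] at hle
        simp only [Function.comp]
        rw [if_pos (by omega)]
        rwa [Real.norm_of_nonneg (norm_nonneg _)]
      · intro i hi
        rw [if_neg]
        intro hik
        exact hi ⟨(k - i).toNat, by show k - (((k - i).toNat : ℕ) : ℤ) = i; omega⟩
    have h2 : Summable fun i : ℤ => (if k < i then ‖F k i‖ else 0) := by
      rw [← Function.Injective.summable_iff e2inj ?_]
      · refine Summable.of_norm_bounded (g := fun j => (Cu * K * ru) * ru ^ j)
          ((summable_geometric_of_lt_one hru0.le hru1).mul_left _) fun j => ?_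
        have hle := hFnorm_gt k (k + 1 + j) (by omega)
        rw [show ((k + 1 + (j : ℤ)) - k).toNat = j + 1 from by omega] at hle
        simp only [Function.comp]
        rw [if_pos (by omega)]
        rw [Real.norm_of_nonneg (norm_nonneg _)]
        calc ‖F k (k + 1 + (j : ℤ))‖ ≤ Cu * K * ru ^ (j + 1) := hle
          _ = (Cu * K * ru) * ru ^ j := by ring
      · intro i hi
        rw [if_neg]
        intro hik
        exact hi ⟨(i - k - 1).toNat, by show k + 1 + (((i - k - 1).toNat : ℕ) : ℤ) = i; omega⟩
    refine (h1.add h2).congr fun i => ?_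
    by_cases hik : i ≤ k
    · rw [if_pos hik, if_neg (by omega), add_zero]
    · rw [if_neg hik, if_pos (by omega), zero_add]
  have hsumF : ∀ k : ℤ, Summable (F k) := fun k => (hsum_norm k).of_norm
  have hlti : ∀ k : ℤ, ltiSol As Au Bt Y k = ∑' i : ℤ, F k i := fun k => rfl
  -- Part 3 data
  have hGs_sum : ∀ k : ℤ, Summable (fun j : ℕ =>
      (As ^ j).mulVec ((Bt.submatrix Sum.inl id).mulVec (Y (k - (j : ℤ) - 1)))) := by
    intro k
    refine Summable.of_norm_bounded (g := fun j => Cs * K * rs ^ j)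
      ((summable_geometric_of_lt_one hrs0.le hrs1).mul_left _) fun j => hgs_norm j _
  have hGu_sum : ∀ k : ℤ, Summable (fun j : ℕ =>
      (Au⁻¹ ^ (j + 1)).mulVec ((Bt.submatrix Sum.inr id).mulVec (Y (k + (j : ℤ))))) := by
    intro k
    refine Summable.of_norm_bounded (g := fun j => (Cu * K * ru) * ru ^ j)
      ((summable_geometric_of_lt_one hru0.le hru1).mul_left _) fun j => ?_
    calc ‖(Au⁻¹ ^ (j + 1)).mulVec ((Bt.submatrix Sum.inr id).mulVec (Y (k + (j : ℤ))))‖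
        ≤ Cu * K * ru ^ (j + 1) := hgu_norm _ _
      _ = (Cu * K * ru) * ru ^ j := by ring
  have hstable : ∀ k : ℤ, (fun a : Fin v => ltiSol As Au Bt Y k (Sum.inl a)) =
      ∑' j : ℕ, (As ^ j).mulVec ((Bt.submatrix Sum.inl id).mulVec (Y (k - (j : ℤ) - 1))) := by
    intro k
    funext a
    have h1 : ltiSol As Au Bt Y k (Sum.inl a) = ∑' i : ℤ, F k i (Sum.inl a) := by
      rw [hlti k]
      exact tsum_apply (hsumF k)
    rw [h1, tsum_apply (hGs_sum k)]
    have e1inj : Function.Injective (fun j : ℕ => k - (j : ℤ)) := by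
      intro a' b' h'
      have h'' : k - (a' : ℤ) = k - (b' : ℤ) := h'
      omega
    have hsupp : Function.support (fun i : ℤ => F k i (Sum.inl a)) ⊆
        Set.range (fun j : ℕ => k - (j : ℤ)) := by
      intro i hi
      by_contra hmem
      have hik : k < i := by
        by_contra hik'
        exact hmem ⟨(k - i).toNat, by show k - (((k - i).toNat : ℕ) : ℤ) = i; omega⟩
      apply hi
      show F k i (Sum.inl a) = 0
      rw [hFgt k i hik]
      rfl
    rw [← Function.Injective.tsum_eq e1inj hsupp]
    refine tsum_congr fun j => ?_
    rw [hFle k (k - j) (by omega)]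
    simp only [Sum.elim_inl]
    rw [show ((k : ℤ) - (k - (j : ℤ))).toNat = j from by omega]
  have hunstable : ∀ k : ℤ, (fun b : Fin w => ltiSol As Au Bt Y k (Sum.inr b)) =
      -∑' j : ℕ, (Au⁻¹ ^ (j + 1)).mulVec ((Bt.submatrix Sum.inr id).mulVec (Y (k + (j : ℤ)))) := by
    intro k
    funext b
    have h1 : ltiSol As Au Bt Y k (Sum.inr b) = ∑' i : ℤ, F k i (Sum.inr b) := by
      rw [hlti k]
      exact tsum_apply (hsumF k)
    rw [h1]
    have hRHS : (-∑' j : ℕ, (Au⁻¹ ^ (j + 1)).mulVec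
        ((Bt.submatrix Sum.inr id).mulVec (Y (k + (j : ℤ))))) b =
        -∑' j : ℕ, (Au⁻¹ ^ (j + 1)).mulVec
          ((Bt.submatrix Sum.inr id).mulVec (Y (k + (j : ℤ)))) b := by
      rw [Pi.neg_apply, tsum_apply (hGu_sum k)]
    rw [hRHS]
    have e2inj : Function.Injective (fun j : ℕ => k + 1 + (j : ℤ)) := by
      intro a' b' h'
      have h'' : k + 1 + (a' : ℤ) = k + 1 + (b' : ℤ) := h'
      omega
    have hsupp : Function.support (fun i : ℤ => F k i (Sum.inr b)) ⊆
        Set.range (fun j : ℕ => k + 1 + (j : ℤ)) := by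
      intro i hi
      by_contra hmem
      have hik : i ≤ k := by
        by_contra hik'
        exact hmem ⟨(i - k - 1).toNat, by show k + 1 + (((i - k - 1).toNat : ℕ) : ℤ) = i; omega⟩
      apply hi
      show F k i (Sum.inr b) = 0
      rw [hFle k i hik]
      rfl
    rw [← Function.Injective.tsum_eq e2inj hsupp, ← tsum_neg]
    refine tsum_congr fun j => ?_
    rw [hFgt k (k + 1 + j) (by omega)]
    simp only [Sum.elim_inr, Pi.neg_apply]
    rw [show ((k + 1 + (j : ℤ)) - k).toNat = j + 1 from by omega,
      show (k + 1 + (j : ℤ) - 1) = k + (j : ℤ) from by omega]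
  -- Part 2 : boundedness
  have hbound : ∃ C : ℝ, ∀ k : ℤ, ‖ltiSol As Au Bt Y k‖ ≤ C := by
    refine ⟨max (Cs * K * (1 - rs)⁻¹) (Cu * K * ru * (1 - ru)⁻¹), fun k => ?_⟩
    have hb0 : (0:ℝ) ≤ max (Cs * K * (1 - rs)⁻¹) (Cu * K * ru * (1 - ru)⁻¹) := by
      refine le_max_of_le_left ?_
      have : (0:ℝ) < 1 - rs := by linarith
      positivity
    refine (pi_norm_le_iff_of_nonneg hb0).mpr fun s => ?_
    cases s with
    | inl a =>
      have h1 := congrFun (hstable k) a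
      rw [h1, tsum_apply (hGs_sum k)]
      refine le_max_of_le_left ?_
      have hsn : Summable fun j : ℕ =>
          ‖(As ^ j).mulVec ((Bt.submatrix Sum.inl id).mulVec (Y (k - (j : ℤ) - 1))) a‖ := by
        refine Summable.of_norm_bounded (g := fun j => Cs * K * rs ^ j)
          ((summable_geometric_of_lt_one hrs0.le hrs1).mul_left _) fun j => ?_
        rw [Real.norm_of_nonneg (norm_nonneg _)]
        exact (norm_le_pi_norm _ a).trans (hgs_norm j _)
      calc ‖∑' j : ℕ, (As ^ j).mulVec ((Bt.submatrix Sum.inl id).mulVec (Y (k - (j : ℤ) - 1))) a‖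
          ≤ ∑' j : ℕ, ‖(As ^ j).mulVec ((Bt.submatrix Sum.inl id).mulVec (Y (k - (j : ℤ) - 1))) a‖ :=
            norm_tsum_le_tsum_norm hsn
        _ ≤ ∑' j : ℕ, Cs * K * rs ^ j := by
            refine Summable.tsum_le_tsum (fun j => ?_) hsn
              ((summable_geometric_of_lt_one hrs0.le hrs1).mul_left _)
            exact (norm_le_pi_norm _ a).trans (hgs_norm j _)
        _ = Cs * K * (1 - rs)⁻¹ := by
            rw [tsum_mul_left, tsum_geometric_of_lt_one hrs0.le hrs1]
    | inr b =>
      have h1 := congrFun (hunstable k) b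
      rw [h1, Pi.neg_apply, tsum_apply (hGu_sum k), norm_neg]
      refine le_max_of_le_right ?_
      have hsn : Summable fun j : ℕ =>
          ‖(Au⁻¹ ^ (j + 1)).mulVec ((Bt.submatrix Sum.inr id).mulVec (Y (k + (j : ℤ)))) b‖ := by
        refine Summable.of_norm_bounded (g := fun j => (Cu * K * ru) * ru ^ j)
          ((summable_geometric_of_lt_one hru0.le hru1).mul_left _) fun j => ?_
        rw [Real.norm_of_nonneg (norm_nonneg _)]
        refine (norm_le_pi_norm _ b).trans ((hgu_norm (j+1) _).trans ?_)
        rw [pow_succ]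
        ring_nf
        exact le_rfl
      calc ‖∑' j : ℕ, (Au⁻¹ ^ (j + 1)).mulVec ((Bt.submatrix Sum.inr id).mulVec (Y (k + (j : ℤ)))) b‖
          ≤ ∑' j : ℕ, ‖(Au⁻¹ ^ (j + 1)).mulVec ((Bt.submatrix Sum.inr id).mulVec (Y (k + (j : ℤ)))) b‖ :=
            norm_tsum_le_tsum_norm hsn
        _ ≤ ∑' j : ℕ, (Cu * K * ru) * ru ^ j := by
            refine Summable.tsum_le_tsum (fun j => ?_) hsn
              ((summable_geometric_of_lt_one hru0.le hru1).mul_left _)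
            refine (norm_le_pi_norm _ b).trans ((hgu_norm (j+1) _).trans ?_)
            rw [pow_succ]
            ring_nf
            exact le_rfl
        _ = Cu * K * ru * (1 - ru)⁻¹ := by
            rw [tsum_mul_left, tsum_geometric_of_lt_one hru0.le hru1]
  -- Part 5 : recursion
  have hrec : ∀ k : ℤ, ltiSol As Au Bt Y (k + 1) =
      (Matrix.fromBlocks As 0 0 Au).mulVec (ltiSol As Au Bt Y k) + Bt.mulVec (Y k) := by
    intro k
    have hrecS : (fun a : Fin v => ltiSol As Au Bt Y (k + 1) (Sum.inl a)) =
        As.mulVec (fun a : Fin v => ltiSol As Au Bt Y k (Sum.inl a)) +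
          (Bt.submatrix Sum.inl id).mulVec (Y k) := by
      rw [hstable (k + 1), hstable k]
      set G : ℕ → Fin v → ℝ := fun j =>
        (As ^ j).mulVec ((Bt.submatrix Sum.inl id).mulVec (Y (k - (j : ℤ) - 1))) with hG
      set G' : ℕ → Fin v → ℝ := fun j =>
        (As ^ j).mulVec ((Bt.submatrix Sum.inl id).mulVec (Y (k + 1 - (j : ℤ) - 1))) with hG'
      have hsumG : Summable G := hGs_sum k
      have hsumG' : Summable G' := hGs_sum (k + 1)
      have key : ∀ j : ℕ, G' (j + 1) = As.mulVec (G j) := by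
        intro j
        rw [hG', hG]
        dsimp only
        have h1 : As.mulVec ((As ^ j).mulVec
            ((Bt.submatrix Sum.inl id).mulVec (Y (k - (j : ℤ) - 1)))) =
            (As * As ^ j).mulVec
              ((Bt.submatrix Sum.inl id).mulVec (Y (k - (j : ℤ) - 1))) := by
          rw [Matrix.mulVec_mulVec]
        rw [h1, ← pow_succ']
        exact congrArg (fun t => (As ^ (j + 1)).mulVec
          ((Bt.submatrix Sum.inl id).mulVec (Y t))) (by omega)
      have key0 : G' 0 = (Bt.submatrix Sum.inl id).mulVec (Y k) := by
        rw [hG']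
        dsimp only
        rw [pow_zero, Matrix.one_mulVec]
        exact congrArg (fun t => (Bt.submatrix Sum.inl id).mulVec (Y t)) (by omega)
      calc ∑' j : ℕ, G' j = G' 0 + ∑' j : ℕ, G' (j + 1) := Summable.tsum_eq_zero_add hsumG'
        _ = (Bt.submatrix Sum.inl id).mulVec (Y k) + ∑' j : ℕ, As.mulVec (G j) := by
            rw [key0]
            exact congrArg _ (tsum_congr fun j => key j)
        _ = As.mulVec (∑' j : ℕ, G j) + (Bt.submatrix Sum.inl id).mulVec (Y k) := by
            rw [← mulVec_tsum As hsumG, add_comm]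
    have hAuinv : ∀ j : ℕ, Au * Au⁻¹ ^ (j + 1) = Au⁻¹ ^ j := by
      intro j
      rw [pow_succ', ← mul_assoc, Matrix.mul_nonsing_inv Au hAudet, one_mul]
    have hrecU : (fun b : Fin w => ltiSol As Au Bt Y (k + 1) (Sum.inr b)) =
        Au.mulVec (fun b : Fin w => ltiSol As Au Bt Y k (Sum.inr b)) +
          (Bt.submatrix Sum.inr id).mulVec (Y k) := by
      rw [hunstable (k + 1), hunstable k]
      set H : ℕ → Fin w → ℝ := fun j =>
        (Au⁻¹ ^ (j + 1)).mulVec ((Bt.submatrix Sum.inr id).mulVec (Y (k + (j : ℤ)))) with hH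
      set H' : ℕ → Fin w → ℝ := fun j =>
        (Au⁻¹ ^ (j + 1)).mulVec ((Bt.submatrix Sum.inr id).mulVec (Y (k + 1 + (j : ℤ)))) with hH'
      set Q : ℕ → Fin w → ℝ := fun j =>
        (Au⁻¹ ^ j).mulVec ((Bt.submatrix Sum.inr id).mulVec (Y (k + (j : ℤ)))) with hQ
      have hsumH : Summable H := hGu_sum k
      have hsumH' : Summable H' := hGu_sum (k + 1)
      have hsumQ : Summable Q := by
        rw [hQ]
        refine Summable.of_norm_bounded (g := fun j => Cu * K * ru ^ j)
          ((summable_geometric_of_lt_one hru0.le hru1).mul_left _) fun j => hgu_norm j _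
      have key : ∀ j : ℕ, Au.mulVec (H j) = Q j := by
        intro j
        rw [hH, hQ]
        dsimp only
        rw [Matrix.mulVec_mulVec, hAuinv j]
      have keyQ : ∀ j : ℕ, Q (j + 1) = H' j := by
        intro j
        rw [hQ, hH']
        dsimp only
        exact congrArg (fun t => (Au⁻¹ ^ (j + 1)).mulVec
          ((Bt.submatrix Sum.inr id).mulVec (Y t))) (by omega)
      have keyQ0 : Q 0 = (Bt.submatrix Sum.inr id).mulVec (Y k) := by
        rw [hQ]
        dsimp only
        rw [pow_zero, Matrix.one_mulVec]
        exact congrArg (fun t => (Bt.submatrix Sum.inr id).mulVec (Y t)) (by omega)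
      rw [Matrix.mulVec_neg, mulVec_tsum Au hsumH]
      have e4 : (∑' j : ℕ, Au.mulVec (H j)) = Q 0 + ∑' j : ℕ, Q (j + 1) := by
        rw [tsum_congr fun j => key j]
        exact Summable.tsum_eq_zero_add hsumQ
      rw [e4, keyQ0, tsum_congr fun j => keyQ j]
      abel
    funext s
    rw [Pi.add_apply, fromBlocks_diag_mulVec]
    cases s with
    | inl a =>
      rw [Sum.elim_inl]
      have h2 : Bt.mulVec (Y k) (Sum.inl a) = (Bt.submatrix Sum.inl id).mulVec (Y k) a :=
        congrFun (mulVec_comp_inl Bt (Y k)) a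
      rw [h2]
      have h3 : (ltiSol As Au Bt Y k) ∘ Sum.inl =
          (fun a : Fin v => ltiSol As Au Bt Y k (Sum.inl a)) := rfl
      rw [h3]
      exact (congrFun hrecS a).trans rfl
    | inr b =>
      rw [Sum.elim_inr]
      have h2 : Bt.mulVec (Y k) (Sum.inr b) = (Bt.submatrix Sum.inr id).mulVec (Y k) b :=
        congrFun (mulVec_comp_inr Bt (Y k)) b
      rw [h2]
      have h3 : (ltiSol As Au Bt Y k) ∘ Sum.inr =
          (fun b : Fin w => ltiSol As Au Bt Y k (Sum.inr b)) := rfl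
      rw [h3]
      exact (congrFun hrecU b).trans rfl
  exact ⟨hsum_norm, hbound, fun k => ⟨hGs_sum k, hstable k⟩,
    fun k => ⟨hGu_sum k, hunstable k⟩, hrec⟩
end
end

section
/- (Avrachenkov's convergence theorem for Newton-type ILC) Suppose there exists ρ > 0 such that g is continuously differentiable on the open ball S(u_d, ρ) = { u ∈ ℝ^M : ‖u − u_d‖₂ < ρ } and its Jacobian Dg is Lipschitz continuous with respect to u on S(u_d, ρ). Suppose the learning matrices satisfy, along the iteration, ‖L_ℓ‖₂ ≤ ε₁ for some constant ε₁ > 0 and ‖I − L_ℓ Dg(u_ℓ)‖₂ ≤ q for some constant q < 1, for all ℓ ≥ 0. Then there exists ε₂ > 0 such that whenever the initial input satisfies ‖u₀ − u_d‖₂ < ε₂, the iterates of the learning law u_{ℓ+1} = u_ℓ + L_ℓ (r − g(u_ℓ)) yield tracking error e_ℓ = r − g(u_ℓ) converging to 0 as ℓ → ∞. -/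
noncomputable section

lemma seg_norm_le {E : Type*} [NormedAddCommGroup E] [NormedSpace ℝ E] {x y z : E}
    (hz : z ∈ segment ℝ x y) : ‖z - x‖ ≤ ‖y - x‖ := by
  obtain ⟨a, b, ha, hb, hab, rfl⟩ := hz
  have ha' : a = 1 - b := by linarith
  subst ha'
  have h : (1 - b) • x + b • y - x = b • (y - x) := by module
  rw [h, norm_smul, Real.norm_of_nonneg hb]
  exact mul_le_of_le_one_left (norm_nonneg _) (by linarith)

/-- **Avrachenkov's convergence theorem for Newton-type ILC.**
Suppose `g` is continuously differentiable on the ball `S(u_d, ρ)` with Lipschitz Jacobian,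
and along the iteration the learning matrices satisfy `‖L_ℓ‖ ≤ ε₁` and
`‖I − L_ℓ Dg(u_ℓ)‖ ≤ q < 1`.  Then there exists `ε₂ > 0` such that whenever `‖u₀ − u_d‖ < ε₂`,
the learning law `u_{ℓ+1} = u_ℓ + L_ℓ (r − g(u_ℓ))` yields tracking error
`e_ℓ = r − g(u_ℓ) → 0`. -/
theorem avrachenkov_newton_ilc_convergence {M : ℕ} (hM : 1 ≤ M)
    (g : EuclideanSpace ℝ (Fin M) → EuclideanSpace ℝ (Fin M))
    (r ud : EuclideanSpace ℝ (Fin M)) (hud : g ud = r)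
    (ρ : ℝ) (hρ : 0 < ρ)
    (Dg : EuclideanSpace ℝ (Fin M) → (EuclideanSpace ℝ (Fin M) →L[ℝ] EuclideanSpace ℝ (Fin M)))
    -- `g` is continuously differentiable on the ball, with Lipschitz Jacobian `Dg`
    (hDg : ∀ u ∈ Metric.ball ud ρ, HasFDerivAt g (Dg u) u)
    (lip : NNReal) (hlip : LipschitzOnWith lip Dg (Metric.ball ud ρ))
    (ε₁ : ℝ) (hε₁ : 0 < ε₁) (q : ℝ) (hq : q < 1) :
    ∃ ε₂ > (0 : ℝ),
      ∀ (L : ℕ → EuclideanSpace ℝ (Fin M) →L[ℝ] EuclideanSpace ℝ (Fin M))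
        (u : ℕ → EuclideanSpace ℝ (Fin M)),
        (∀ ℓ : ℕ, u (ℓ + 1) = u ℓ + L ℓ (r - g (u ℓ))) →
        (∀ ℓ : ℕ, ‖L ℓ‖ ≤ ε₁) →
        (∀ ℓ : ℕ, ‖ContinuousLinearMap.id ℝ (EuclideanSpace ℝ (Fin M)) -
            (L ℓ).comp (Dg (u ℓ))‖ ≤ q) →
        ‖u 0 - ud‖ < ε₂ →
        Filter.Tendsto (fun ℓ : ℕ => r - g (u ℓ)) Filter.atTop (nhds 0) := by
  set q₀ : ℝ := max q 0 with hq₀def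
  have hq₀0 : 0 ≤ q₀ := le_max_right _ _
  have hq₀1 : q₀ < 1 := max_lt hq one_pos
  set q' : ℝ := (1 + q₀) / 2 with hq'def
  have hq'0 : 0 ≤ q' := by positivity
  have hq'1 : q' < 1 := by rw [hq'def]; linarith
  have hq₀q' : q₀ ≤ q' := by rw [hq'def]; linarith
  have hden : (0 : ℝ) < 2 * (ε₁ * (lip : ℝ) + 1) := by positivity
  have hpos : (0:ℝ) < min (ρ / 2) ((1 - q₀) / (2 * (ε₁ * (lip : ℝ) + 1))) :=
    lt_min (by positivity) (div_pos (by linarith) hden)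
  refine ⟨min (ρ / 2) ((1 - q₀) / (2 * (ε₁ * (lip : ℝ) + 1))), hpos, ?_⟩
  intro L u hu hL hLq hu0
  set ε₂ : ℝ := min (ρ / 2) ((1 - q₀) / (2 * (ε₁ * (lip : ℝ) + 1))) with hε₂def
  have hε₂ρ : ε₂ ≤ ρ / 2 := min_le_left _ _
  have hε₂0 : (0 : ℝ) ≤ ε₂ := hpos.le
  have hε₂key : ε₁ * (lip : ℝ) * ε₂ ≤ q' - q₀ := by
    have h1 : ε₂ ≤ (1 - q₀) / (2 * (ε₁ * (lip : ℝ) + 1)) := min_le_right _ _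
    have h2 : (0 : ℝ) ≤ ε₁ * (lip : ℝ) := by positivity
    rw [hq'def]
    rw [le_div_iff₀ hden] at h1
    nlinarith
  -- key invariant
  have key : ∀ ℓ : ℕ, ‖u ℓ - ud‖ ≤ q' ^ ℓ * ε₂ := by
    intro ℓ
    induction ℓ with
    | zero => simpa using hu0.le
    | succ ℓ ih =>
      have hpow1 : q' ^ ℓ ≤ 1 := pow_le_one₀ hq'0 hq'1.le
      have hδε₂ : ‖u ℓ - ud‖ ≤ ε₂ := le_trans ih (by nlinarith)
      have hball : u ℓ ∈ Metric.ball ud ρ := by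
        rw [Metric.mem_ball, dist_eq_norm]
        linarith
      -- Taylor estimate on the segment from `u ℓ` to `ud`
      set s : Set (EuclideanSpace ℝ (Fin M)) := segment ℝ (u ℓ) ud with hsdef
      have hs_sub : s ⊆ Metric.ball ud ρ :=
        (convex_ball ud ρ).segment_subset hball (Metric.mem_ball_self hρ)
      have hf : ∀ z ∈ s, HasFDerivWithinAt g (Dg z) s z :=
        fun z hz => (hDg z (hs_sub hz)).hasFDerivWithinAt
      have hbound : ∀ z ∈ s, ‖Dg z - Dg (u ℓ)‖ ≤ (lip : ℝ) * ‖u ℓ - ud‖ := by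
        intro z hz
        have h1 : dist (Dg z) (Dg (u ℓ)) ≤ (lip : ℝ) * dist z (u ℓ) :=
          hlip.dist_le_mul z (hs_sub hz) (u ℓ) hball
        have h2 : ‖z - u ℓ‖ ≤ ‖ud - u ℓ‖ := seg_norm_le hz
        rw [dist_eq_norm, dist_eq_norm] at h1
        rw [norm_sub_rev (u ℓ) ud]
        calc ‖Dg z - Dg (u ℓ)‖ ≤ (lip : ℝ) * ‖z - u ℓ‖ := h1
          _ ≤ (lip : ℝ) * ‖ud - u ℓ‖ := by
              exact mul_le_mul_of_nonneg_left h2 (lip.coe_nonneg)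
      have hR : ‖g ud - g (u ℓ) - (Dg (u ℓ)) (ud - u ℓ)‖ ≤
          ((lip : ℝ) * ‖u ℓ - ud‖) * ‖ud - u ℓ‖ :=
        (convex_segment _ _).norm_image_sub_le_of_norm_hasFDerivWithin_le' hf hbound
          (left_mem_segment ℝ _ _) (right_mem_segment ℝ _ _)
      -- recursion for the input error
      have hrec : u (ℓ + 1) - ud =
          (ContinuousLinearMap.id ℝ (EuclideanSpace ℝ (Fin M)) -
            (L ℓ).comp (Dg (u ℓ))) (u ℓ - ud) +
          (L ℓ) (g ud - g (u ℓ) - (Dg (u ℓ)) (ud - u ℓ)) := by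
        have hneg : (Dg (u ℓ)) (ud - u ℓ) = -((Dg (u ℓ)) (u ℓ - ud)) := by
          rw [← map_neg]; congr 1; abel
        rw [hu ℓ, ← hud]
        simp only [ContinuousLinearMap.sub_apply, ContinuousLinearMap.coe_comp',
          Function.comp_apply, ContinuousLinearMap.id_apply, map_sub, hneg, map_neg]
        abel
      have hnorm1 : ‖(ContinuousLinearMap.id ℝ (EuclideanSpace ℝ (Fin M)) -
            (L ℓ).comp (Dg (u ℓ))) (u ℓ - ud)‖ ≤ q₀ * ‖u ℓ - ud‖ := by
        calc _ ≤ ‖ContinuousLinearMap.id ℝ (EuclideanSpace ℝ (Fin M)) -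
              (L ℓ).comp (Dg (u ℓ))‖ * ‖u ℓ - ud‖ := ContinuousLinearMap.le_opNorm _ _
          _ ≤ q₀ * ‖u ℓ - ud‖ :=
              mul_le_mul_of_nonneg_right (le_trans (hLq ℓ) (le_max_left _ _)) (norm_nonneg _)
      have hnorm2 : ‖(L ℓ) (g ud - g (u ℓ) - (Dg (u ℓ)) (ud - u ℓ))‖ ≤
          ε₁ * (((lip : ℝ) * ‖u ℓ - ud‖) * ‖ud - u ℓ‖) := by
        calc _ ≤ ‖L ℓ‖ * ‖g ud - g (u ℓ) - (Dg (u ℓ)) (ud - u ℓ)‖ :=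
              ContinuousLinearMap.le_opNorm _ _
          _ ≤ ε₁ * (((lip : ℝ) * ‖u ℓ - ud‖) * ‖ud - u ℓ‖) := by
              apply mul_le_mul (hL ℓ) hR (norm_nonneg _) hε₁.le
      have hstep : ‖u (ℓ + 1) - ud‖ ≤ q' * ‖u ℓ - ud‖ := by
        rw [hrec]
        have h3 := norm_add_le ((ContinuousLinearMap.id ℝ (EuclideanSpace ℝ (Fin M)) -
            (L ℓ).comp (Dg (u ℓ))) (u ℓ - ud))
          ((L ℓ) (g ud - g (u ℓ) - (Dg (u ℓ)) (ud - u ℓ)))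
        have h4 : ‖ud - u ℓ‖ = ‖u ℓ - ud‖ := norm_sub_rev _ _
        rw [h4] at hnorm2
        have h5 : (0 : ℝ) ≤ (lip : ℝ) := lip.coe_nonneg
        have hx0 : (0 : ℝ) ≤ ‖u ℓ - ud‖ := norm_nonneg _
        have h6a : ε₁ * (lip : ℝ) * ‖u ℓ - ud‖ ≤ q' - q₀ :=
          le_trans (mul_le_mul_of_nonneg_left hδε₂ (by positivity)) hε₂key
        have h6 : ε₁ * ((lip : ℝ) * ‖u ℓ - ud‖ * ‖u ℓ - ud‖) ≤ (q' - q₀) * ‖u ℓ - ud‖ := by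
          have := mul_le_mul_of_nonneg_right h6a hx0
          linarith [this]
        linarith [h3, hnorm1, hnorm2, h6]
      calc ‖u (ℓ + 1) - ud‖ ≤ q' * ‖u ℓ - ud‖ := hstep
        _ ≤ q' * (q' ^ ℓ * ε₂) := mul_le_mul_of_nonneg_left ih hq'0
        _ = q' ^ (ℓ + 1) * ε₂ := by ring
  -- conclude convergence
  have hten : Filter.Tendsto (fun ℓ : ℕ => q' ^ ℓ * ε₂) Filter.atTop (nhds 0) := by
    have := (tendsto_pow_atTop_nhds_zero_of_lt_one hq'0 hq'1).mul_const ε₂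
    simpa using this
  have hu_tend : Filter.Tendsto u Filter.atTop (nhds ud) := by
    rw [tendsto_iff_norm_sub_tendsto_zero]
    exact squeeze_zero (fun n => norm_nonneg _) key hten
  have hg_tend : Filter.Tendsto (fun ℓ : ℕ => g (u ℓ)) Filter.atTop (nhds (g ud)) :=
    ((hDg ud (Metric.mem_ball_self hρ)).continuousAt.tendsto).comp hu_tend
  have := Filter.Tendsto.sub (tendsto_const_nhds (x := r)) hg_tend
  simpa [hud] using this
end
end
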